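/- Let Ω ≥ 1, k ≥ 1, l_i ≤ 2^Ω − 1 for 1 ≤ i ≤ k. Define Next_Ω(l) = l + 1 if l < 2^Ω − 1 and Next_Ω(l) = 2^Ω − 1 otherwise. Let L = Σ_i l_i · 2^{(Ω+1)(i−1)}, E₁ = Σ_i 2^{(Ω+1)(i−1)}, E₂ = Σ_i 2^Ω · 2^{(Ω+1)(i−1)}, T = L + E₁, and L′ = T − ((T &&& E₂) >>> Ω). Then L′ = Σ_{i=1}^{k} Next_Ω(l_i) · 2^{(Ω+1)(i−1)}. -/

import Mathlib

/-- AND splits across block concatenation. -/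
lemma block_land (w x y u v : ℕ) (hx : x < 2 ^ w) (hu : u < 2 ^ w) :
    (x + 2 ^ w * y) &&& (u + 2 ^ w * v) = (x &&& u) + 2 ^ w * (y &&& v) := by
  have hxu : x &&& u < 2 ^ w := lt_of_le_of_lt (Nat.and_le_left) hx
  apply Nat.eq_of_testBit_eq
  intro j
  have h1 : x + 2 ^ w * y = 2 ^ w * y + x := by ring
  have h2 : u + 2 ^ w * v = 2 ^ w * v + u := by ring
  have h3 : (x &&& u) + 2 ^ w * (y &&& v) = 2 ^ w * (y &&& v) + (x &&& u) := by ring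
  rw [h1, h2, h3, Nat.testBit_land,
    Nat.testBit_two_pow_mul_add _ hx, Nat.testBit_two_pow_mul_add _ hu,
    Nat.testBit_two_pow_mul_add _ hxu]
  by_cases h : j < w <;> simp [h, Nat.testBit_land]

lemma land_sum (Ω : ℕ) : ∀ k (a : ℕ → ℕ), (∀ i < k, a i ≤ 2 ^ Ω) →
    ((∑ i ∈ Finset.range k, a i * 2 ^ ((Ω + 1) * i)) &&&
      (∑ i ∈ Finset.range k, 2 ^ Ω * 2 ^ ((Ω + 1) * i))) =
    ∑ i ∈ Finset.range k, (if a i = 2 ^ Ω then 2 ^ Ω else 0) * 2 ^ ((Ω + 1) * i) := by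
  intro k
  induction k with
  | zero => simp
  | succ n ih =>
    intro a ha
    have hpow : ∀ i : ℕ, 2 ^ ((Ω + 1) * (i + 1)) = 2 ^ (Ω + 1) * 2 ^ ((Ω + 1) * i) := by
      intro i
      rw [← pow_add]
      ring_nf
    have hsplit : ∀ f : ℕ → ℕ,
        (∑ i ∈ Finset.range (n + 1), f i * 2 ^ ((Ω + 1) * i)) =
          f 0 + 2 ^ (Ω + 1) * ∑ i ∈ Finset.range n, f (i + 1) * 2 ^ ((Ω + 1) * i) := by
      intro f
      rw [Finset.sum_range_succ' (fun i => f i * 2 ^ ((Ω + 1) * i)) n,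
        Finset.mul_sum]
      simp only [hpow, Nat.mul_zero, pow_zero, Nat.mul_one]
      rw [add_comm]
      congr 1
      apply Finset.sum_congr rfl
      intro i _
      ring
    have hΩlt : 2 ^ Ω < 2 ^ (Ω + 1) := Nat.pow_lt_pow_right (by norm_num) (by omega)
    have ha0 : a 0 < 2 ^ (Ω + 1) := lt_of_le_of_lt (ha 0 (by omega)) hΩlt
    rw [hsplit a, hsplit (fun _ => 2 ^ Ω), hsplit (fun i => if a i = 2 ^ Ω then 2 ^ Ω else 0),
      block_land _ _ _ _ _ ha0 hΩlt,
      ih (fun i => a (i + 1)) (fun i hi => ha (i + 1) (by omega))]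
    congr 1
    by_cases h : a 0 = 2 ^ Ω
    · simp [h]
    · have hlt : a 0 < 2 ^ Ω := lt_of_le_of_ne (ha 0 (by omega)) h
      rw [Nat.and_two_pow, Nat.testBit_eq_false_of_lt hlt]
      simp [h]

/-- Overflow correction: with `T = L + E₁` and `E₂` the mask of overflow bits,
`L' = T − ((T &&& E₂) >>> Ω)` packs the tuple `(Next_Ω(l₁),…,Next_Ω(l_k))`,
where `Next_Ω(l) = l + 1` if `l < 2^Ω − 1` and `Next_Ω(l) = 2^Ω − 1` otherwise. -/
theorem overflow_correction (Ω k : ℕ) (hΩ : 1 ≤ Ω) (hk : 1 ≤ k)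
    (l : ℕ → ℕ) (hl : ∀ i < k, l i ≤ 2 ^ Ω - 1)
    (L E₁ E₂ T L' : ℕ)
    (hL : L = ∑ i ∈ Finset.range k, l i * 2 ^ ((Ω + 1) * i))
    (hE₁ : E₁ = ∑ i ∈ Finset.range k, 2 ^ ((Ω + 1) * i))
    (hE₂ : E₂ = ∑ i ∈ Finset.range k, 2 ^ Ω * 2 ^ ((Ω + 1) * i))
    (hT : T = L + E₁)
    (hL' : L' = T - ((T &&& E₂) >>> Ω)) :
    L' = ∑ i ∈ Finset.range k,
        (if l i < 2 ^ Ω - 1 then l i + 1 else 2 ^ Ω - 1) * 2 ^ ((Ω + 1) * i) := by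
  have h2 : 2 ≤ 2 ^ Ω := by
    calc 2 = 2 ^ 1 := by norm_num
    _ ≤ 2 ^ Ω := Nat.pow_le_pow_right (by norm_num) hΩ
  set a : ℕ → ℕ := fun i => l i + 1 with ha_def
  have hTsum : T = ∑ i ∈ Finset.range k, a i * 2 ^ ((Ω + 1) * i) := by
    rw [hT, hL, hE₁, ← Finset.sum_add_distrib]
    apply Finset.sum_congr rfl
    intro i _
    ring
  have ha : ∀ i < k, a i ≤ 2 ^ Ω := by
    intro i hi
    have := hl i hi
    simp only [ha_def]
    omega
  have hland : T &&& E₂ = ∑ i ∈ Finset.range k,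
      (if a i = 2 ^ Ω then 2 ^ Ω else 0) * 2 ^ ((Ω + 1) * i) := by
    rw [hTsum, hE₂]
    exact land_sum Ω k a ha
  -- rewrite AND result as 2^Ω * indicator sum
  have hfac : T &&& E₂ = 2 ^ Ω * ∑ i ∈ Finset.range k,
      (if a i = 2 ^ Ω then 1 else 0) * 2 ^ ((Ω + 1) * i) := by
    rw [hland, Finset.mul_sum]
    apply Finset.sum_congr rfl
    intro i _
    by_cases h : a i = 2 ^ Ω <;> simp [h] <;> ring
  have hshift : (T &&& E₂) >>> Ω = ∑ i ∈ Finset.range k,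
      (if a i = 2 ^ Ω then 1 else 0) * 2 ^ ((Ω + 1) * i) := by
    rw [hfac, Nat.shiftRight_eq_div_pow, Nat.mul_div_cancel_left _ (Nat.pow_pos (n := Ω) (by norm_num))]
  rw [hL', hshift, hTsum]
  -- distribute subtraction over the sums
  have key : ∀ i < k, (if a i = 2 ^ Ω then 1 else 0) ≤ a i ∧
      a i - (if a i = 2 ^ Ω then 1 else 0)
        = (if l i < 2 ^ Ω - 1 then l i + 1 else 2 ^ Ω - 1) := by
    intro i hi
    have h1 := hl i hi
    simp only [ha_def]
    refine ⟨by split <;> omega, ?_⟩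
    by_cases h : l i + 1 = 2 ^ Ω
    · rw [if_pos h, if_neg (by omega)]
      omega
    · rw [if_neg h, if_pos (by omega)]
      omega
  have hsub : (∑ i ∈ Finset.range k, a i * 2 ^ ((Ω + 1) * i))
      = (∑ i ∈ Finset.range k,
          (if l i < 2 ^ Ω - 1 then l i + 1 else 2 ^ Ω - 1) * 2 ^ ((Ω + 1) * i))
        + ∑ i ∈ Finset.range k, (if a i = 2 ^ Ω then 1 else 0) * 2 ^ ((Ω + 1) * i) := by
    rw [← Finset.sum_add_distrib]
    apply Finset.sum_congr rfl
    intro i hi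
    have := key i (Finset.mem_range.mp hi)
    rw [← add_mul]
    congr 1
    omega
  rw [hsub, Nat.add_sub_cancel]
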